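/- Dual isothermic surface (Theorem 'Dual isothermic surface', smooth case): Let N ≥ 2, let f: ℝ² → ℝᴺ and s: ℝ² → ℝ be twice continuously differentiable with s everywhere positive, and suppose ⟨∂₁f, ∂₂f⟩ = 0 and ∂₁∂₂f = (∂₂s/s)∂₁f + (∂₁s/s)∂₂f hold everywhere on ℝ². Then: (a) ∂₂(∂₁f/s²) + ∂₁(∂₂f/s²) = 0 everywhere (the one-form df* with ∂₁f* = ∂₁f/s², ∂₂f* = −∂₂f/s² is closed); (b) the functions α₁ = ‖∂₁f‖²/s² and α₂ = ‖∂₂f‖²/s² satisfy ∂₂α₁ = 0 and ∂₁α₂ = 0 (they depend only on u₁ and u₂ respectively); (c) any twice continuously differentiable f*: ℝ² → ℝᴺ with ∂₁f* = ∂₁f/s² and ∂₂f* = −∂₂f/s² satisfies ⟨∂₁f*, ∂₂f*⟩ = 0, ‖∂₁f*‖² = α₁·s⁻², ‖∂₂f*‖² = α₂·s⁻², and ∂₁∂₂f* = (∂₂(s⁻¹)·s)∂₁f* + (∂₁(s⁻¹)·s)∂₂f*. -/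

import Mathlib

/-- Partial derivative in the first coordinate direction of `ℝ²`. -/
noncomputable def pd1 {E : Type*} [NormedAddCommGroup E] [NormedSpace ℝ E]
    (g : ℝ × ℝ → E) (u : ℝ × ℝ) : E :=
  fderiv ℝ g u (1, 0)

/-- Partial derivative in the second coordinate direction of `ℝ²`. -/
noncomputable def pd2 {E : Type*} [NormedAddCommGroup E] [NormedSpace ℝ E]
    (g : ℝ × ℝ → E) (u : ℝ × ℝ) : E :=
  fderiv ℝ g u (0, 1)

lemma pd_hasFDerivAt {E : Type*} [NormedAddCommGroup E] [NormedSpace ℝ E]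
    {g : ℝ × ℝ → E} (hg : ContDiff ℝ 2 g) (w u : ℝ × ℝ) :
    HasFDerivAt (fun v => fderiv ℝ g v w)
      ((ContinuousLinearMap.apply ℝ E w).comp (fderiv ℝ (fderiv ℝ g) u)) u := by
  have h1 : ContDiff ℝ 1 (fderiv ℝ g) := hg.fderiv_right (by norm_num)
  have h2 : HasFDerivAt (fderiv ℝ g) (fderiv ℝ (fderiv ℝ g) u) u :=
    (h1.differentiable (by norm_num) u).hasFDerivAt
  exact (ContinuousLinearMap.apply ℝ E w).hasFDerivAt.comp u h2

set_option maxHeartbeats 1600000 in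
/-- Dual isothermic surface: for an isothermic surface `f` with conformal
metric `s`, (a) the Christoffel one-form is closed, (b) the factors
`α₁ = ‖∂₁f‖²/s²`, `α₂ = ‖∂₂f‖²/s²` depend only on `u₁` resp. `u₂`, and
(c) any primitive `f*` of the Christoffel one-form is isothermic with metric
`s⁻¹` and the same factors. -/
theorem dual_isothermic_surface {N : ℕ} (hN : 2 ≤ N)
    (f : ℝ × ℝ → EuclideanSpace ℝ (Fin N)) (s : ℝ × ℝ → ℝ)
    (hf : ContDiff ℝ 2 f) (hs : ContDiff ℝ 2 s) (hs0 : ∀ u, 0 < s u)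
    (horth : ∀ u, (inner ℝ (pd1 f u) (pd2 f u) : ℝ) = 0)
    (hkoe : ∀ u, pd1 (fun v => pd2 f v) u =
      (pd2 s u / s u) • pd1 f u + (pd1 s u / s u) • pd2 f u) :
    (∀ u, pd2 (fun v => ((s v) ^ 2)⁻¹ • pd1 f v) u +
        pd1 (fun v => ((s v) ^ 2)⁻¹ • pd2 f v) u = 0) ∧
    (∀ u, pd2 (fun v => ‖pd1 f v‖ ^ 2 / (s v) ^ 2) u = 0) ∧
    (∀ u, pd1 (fun v => ‖pd2 f v‖ ^ 2 / (s v) ^ 2) u = 0) ∧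
    (∀ fstar : ℝ × ℝ → EuclideanSpace ℝ (Fin N), ContDiff ℝ 2 fstar →
      (∀ u, pd1 fstar u = ((s u) ^ 2)⁻¹ • pd1 f u) →
      (∀ u, pd2 fstar u = -(((s u) ^ 2)⁻¹ • pd2 f u)) →
      ∀ u, (inner ℝ (pd1 fstar u) (pd2 fstar u) : ℝ) = 0 ∧
        ‖pd1 fstar u‖ ^ 2 = (‖pd1 f u‖ ^ 2 / (s u) ^ 2) * ((s u) ^ 2)⁻¹ ∧
        ‖pd2 fstar u‖ ^ 2 = (‖pd2 f u‖ ^ 2 / (s u) ^ 2) * ((s u) ^ 2)⁻¹ ∧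
        pd1 (fun v => pd2 fstar v) u =
          (pd2 (fun v => (s v)⁻¹) u * s u) • pd1 fstar u +
            (pd1 (fun v => (s v)⁻¹) u * s u) • pd2 fstar u) := by
  have hsd : Differentiable ℝ s := hs.differentiable (by norm_num)
  have hsA : ∀ u, HasFDerivAt s (fderiv ℝ s u) u := fun u => (hsd u).hasFDerivAt
  have hsne : ∀ u, s u ≠ 0 := fun u => (hs0 u).ne'
  have horth' : ∀ u, (inner ℝ (fderiv ℝ f u (1,0)) (fderiv ℝ f u (0,1)) : ℝ) = 0 := horth
  have horth'' : ∀ u, (inner ℝ (fderiv ℝ f u (0,1)) (fderiv ℝ f u (1,0)) : ℝ) = 0 := by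
    intro u; rw [real_inner_comm]; exact horth u
  -- derivative of v ↦ (s v ^ 2)⁻¹
  have hC : ∀ u, HasFDerivAt (fun v => ((s v)^2)⁻¹)
      ((-(((s u)^2)^2)⁻¹) • ((s u) • fderiv ℝ s u + (s u) • fderiv ℝ s u)) u := by
    intro u
    have hsq : HasFDerivAt (fun v => (s v)^2)
        ((s u) • fderiv ℝ s u + (s u) • fderiv ℝ s u) u := by
      simpa [pow_two, Pi.mul_def] using (hsA u).mul (hsA u)
    have hinv : HasDerivAt (fun y : ℝ => y⁻¹) (-(((s u)^2)^2)⁻¹) ((s u)^2) :=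
      hasDerivAt_inv (pow_ne_zero 2 (hsne u))
    simpa [Function.comp_def] using hinv.comp_hasFDerivAt u hsq
  -- derivatives of the partial derivatives of f
  have hD1 : ∀ u, HasFDerivAt (fun v => fderiv ℝ f v (1,0))
      ((ContinuousLinearMap.apply ℝ _ (1,0)).comp (fderiv ℝ (fderiv ℝ f) u)) u :=
    fun u => pd_hasFDerivAt hf (1,0) u
  have hD2 : ∀ u, HasFDerivAt (fun v => fderiv ℝ f v (0,1))
      ((ContinuousLinearMap.apply ℝ _ (0,1)).comp (fderiv ℝ (fderiv ℝ f) u)) u :=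
    fun u => pd_hasFDerivAt hf (0,1) u
  have hsymm : ∀ u (v w : ℝ × ℝ),
      fderiv ℝ (fderiv ℝ f) u v w = fderiv ℝ (fderiv ℝ f) u w v :=
    fun u => hf.contDiffAt.isSymmSndFDerivAt (by norm_num)
  -- the mixed second derivative
  have hM : ∀ u, fderiv ℝ (fderiv ℝ f) u (1,0) (0,1)
      = (fderiv ℝ s u (0,1) / s u) • fderiv ℝ f u (1,0)
        + (fderiv ℝ s u (1,0) / s u) • fderiv ℝ f u (0,1) := by
    intro u
    have h2 : pd1 (fun v => pd2 f v) u = fderiv ℝ (fderiv ℝ f) u (1,0) (0,1) := by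
      simp only [pd1, pd2, (hD2 u).fderiv]
      simp
    rw [← h2]; exact hkoe u
  -- evaluation of the derivative of (s²)⁻¹ • ∂ᵢ f
  have eA1 : ∀ u, pd2 (fun v => ((s v) ^ 2)⁻¹ • pd1 f v) u
      = ((s u)^2)⁻¹ • fderiv ℝ (fderiv ℝ f) u (0,1) (1,0)
        + (-(((s u)^2)^2)⁻¹ * (s u * fderiv ℝ s u (0,1) + s u * fderiv ℝ s u (0,1)))
            • fderiv ℝ f u (1,0) := by
    intro u
    have h : HasFDerivAt (fun v => ((s v) ^ 2)⁻¹ • pd1 f v)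
        (((s u)^2)⁻¹ • ((ContinuousLinearMap.apply ℝ _ (1,0)).comp (fderiv ℝ (fderiv ℝ f) u))
          + ((-(((s u)^2)^2)⁻¹) • ((s u) • fderiv ℝ s u + (s u) • fderiv ℝ s u)).smulRight
              (fderiv ℝ f u (1,0))) u := (hC u).smul (hD1 u)
    simp only [pd2, h.fderiv]
    simp [smul_smul, mul_comm, mul_assoc, mul_left_comm]
    module
  have eA2 : ∀ u, pd1 (fun v => ((s v) ^ 2)⁻¹ • pd2 f v) u
      = ((s u)^2)⁻¹ • fderiv ℝ (fderiv ℝ f) u (1,0) (0,1)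
        + (-(((s u)^2)^2)⁻¹ * (s u * fderiv ℝ s u (1,0) + s u * fderiv ℝ s u (1,0)))
            • fderiv ℝ f u (0,1) := by
    intro u
    have h : HasFDerivAt (fun v => ((s v) ^ 2)⁻¹ • pd2 f v)
        (((s u)^2)⁻¹ • ((ContinuousLinearMap.apply ℝ _ (0,1)).comp (fderiv ℝ (fderiv ℝ f) u))
          + ((-(((s u)^2)^2)⁻¹) • ((s u) • fderiv ℝ s u + (s u) • fderiv ℝ s u)).smulRight
              (fderiv ℝ f u (0,1))) u := (hC u).smul (hD2 u)
    simp only [pd1, h.fderiv]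
    simp [smul_smul, mul_comm, mul_assoc, mul_left_comm]
    module
  refine ⟨?_, ?_, ?_, ?_⟩
  · -- part (a)
    intro u
    rw [eA1 u, eA2 u, hsymm u (0,1) (1,0), hM u]
    have ha := hsne u
    match_scalars <;> field_simp <;> ring
  · -- part (b), first factor
    intro u
    have efn : (fun v => ‖pd1 f v‖ ^ 2 / (s v) ^ 2)
        = (fun v => (inner ℝ (fderiv ℝ f v (1,0)) (fderiv ℝ f v (1,0)) : ℝ) * ((s v)^2)⁻¹) := by
      funext v
      rw [div_eq_mul_inv, ← real_inner_self_eq_norm_sq]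
      rfl
    rw [efn]
    have h : HasFDerivAt
        (fun v => (inner ℝ (fderiv ℝ f v (1,0)) (fderiv ℝ f v (1,0)) : ℝ) * ((s v)^2)⁻¹)
        ((inner ℝ (fderiv ℝ f u (1,0)) (fderiv ℝ f u (1,0)) : ℝ) •
            ((-(((s u)^2)^2)⁻¹) • ((s u) • fderiv ℝ s u + (s u) • fderiv ℝ s u))
          + ((s u)^2)⁻¹ •
            ((fderivInnerCLM ℝ (fderiv ℝ f u (1,0), fderiv ℝ f u (1,0))).comp
              (((ContinuousLinearMap.apply ℝ _ (1,0)).comp (fderiv ℝ (fderiv ℝ f) u)).prod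
                ((ContinuousLinearMap.apply ℝ _ (1,0)).comp (fderiv ℝ (fderiv ℝ f) u))))) u :=
      ((hD1 u).inner ℝ (hD1 u)).mul (hC u)
    simp only [pd2, h.fderiv]
    simp only [ContinuousLinearMap.add_apply, ContinuousLinearMap.smul_apply,
      ContinuousLinearMap.comp_apply, ContinuousLinearMap.prod_apply,
      ContinuousLinearMap.apply_apply, fderivInnerCLM_apply, smul_eq_mul]
    rw [hsymm u (0,1) (1,0), hM u]
    simp only [inner_add_right, inner_add_left, real_inner_smul_right, real_inner_smul_left,
      horth' u, horth'' u]
    have ha := hsne u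
    field_simp
    ring
  · -- part (b), second factor
    intro u
    have efn : (fun v => ‖pd2 f v‖ ^ 2 / (s v) ^ 2)
        = (fun v => (inner ℝ (fderiv ℝ f v (0,1)) (fderiv ℝ f v (0,1)) : ℝ) * ((s v)^2)⁻¹) := by
      funext v
      rw [div_eq_mul_inv, ← real_inner_self_eq_norm_sq]
      rfl
    rw [efn]
    have h : HasFDerivAt
        (fun v => (inner ℝ (fderiv ℝ f v (0,1)) (fderiv ℝ f v (0,1)) : ℝ) * ((s v)^2)⁻¹)
        ((inner ℝ (fderiv ℝ f u (0,1)) (fderiv ℝ f u (0,1)) : ℝ) •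
            ((-(((s u)^2)^2)⁻¹) • ((s u) • fderiv ℝ s u + (s u) • fderiv ℝ s u))
          + ((s u)^2)⁻¹ •
            ((fderivInnerCLM ℝ (fderiv ℝ f u (0,1), fderiv ℝ f u (0,1))).comp
              (((ContinuousLinearMap.apply ℝ _ (0,1)).comp (fderiv ℝ (fderiv ℝ f) u)).prod
                ((ContinuousLinearMap.apply ℝ _ (0,1)).comp (fderiv ℝ (fderiv ℝ f) u))))) u :=
      ((hD2 u).inner ℝ (hD2 u)).mul (hC u)
    simp only [pd1, h.fderiv]
    simp only [ContinuousLinearMap.add_apply, ContinuousLinearMap.smul_apply,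
      ContinuousLinearMap.comp_apply, ContinuousLinearMap.prod_apply,
      ContinuousLinearMap.apply_apply, fderivInnerCLM_apply, smul_eq_mul]
    rw [hM u]
    simp only [inner_add_right, inner_add_left, real_inner_smul_right, real_inner_smul_left,
      horth' u, horth'' u]
    have ha := hsne u
    field_simp
    ring
  · -- part (c)
    intro fstar hfs hp1 hp2 u
    have ha := hsne u
    refine ⟨?_, ?_, ?_, ?_⟩
    · rw [hp1 u, hp2 u]
      simp only [inner_neg_right, real_inner_smul_left, real_inner_smul_right, horth u]
      ring
    · rw [hp1 u, norm_smul]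
      rw [Real.norm_eq_abs, abs_of_pos (by positivity)]
      rw [mul_pow, div_mul_eq_mul_div, eq_div_iff (by positivity)]
      field_simp
    · rw [hp2 u, norm_neg, norm_smul]
      rw [Real.norm_eq_abs, abs_of_pos (by positivity)]
      rw [mul_pow, div_mul_eq_mul_div, eq_div_iff (by positivity)]
      field_simp
    · -- mixed derivative of fstar
      have hfun : (fun v => pd2 fstar v) = (fun v => -(((s v)^2)⁻¹ • fderiv ℝ f v (0,1))) := by
        funext v; exact hp2 v
      have h : HasFDerivAt (fun v => -(((s v)^2)⁻¹ • fderiv ℝ f v (0,1)))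
          (-(((s u)^2)⁻¹ •
              ((ContinuousLinearMap.apply ℝ _ (0,1)).comp (fderiv ℝ (fderiv ℝ f) u))
            + ((-(((s u)^2)^2)⁻¹) • ((s u) • fderiv ℝ s u + (s u) • fderiv ℝ s u)).smulRight
                (fderiv ℝ f u (0,1)))) u := ((hC u).smul (hD2 u)).neg
      have hlhs : pd1 (fun v => pd2 fstar v) u
          = -(((s u)^2)⁻¹ • fderiv ℝ (fderiv ℝ f) u (1,0) (0,1)
            + (-(((s u)^2)^2)⁻¹ * (s u * fderiv ℝ s u (1,0) + s u * fderiv ℝ s u (1,0)))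
              • fderiv ℝ f u (0,1)) := by
        rw [hfun]
        simp only [pd1, h.fderiv]
        simp [smul_smul, mul_comm, mul_assoc, mul_left_comm]
        module
      have hinv : HasFDerivAt (fun v => (s v)⁻¹) ((-((s u)^2)⁻¹) • fderiv ℝ s u) u := by
        have h0 := (hasDerivAt_inv (hsne u)).comp_hasFDerivAt u (hsA u)
        simp only [Function.comp_def] at h0
        convert h0 using 1
      have hi1 : pd1 (fun v => (s v)⁻¹) u = -((s u)^2)⁻¹ * fderiv ℝ s u (1,0) := by
        simp only [pd1, hinv.fderiv]; simp
      have hi2 : pd2 (fun v => (s v)⁻¹) u = -((s u)^2)⁻¹ * fderiv ℝ s u (0,1) := by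
        simp only [pd2, hinv.fderiv]; simp
      rw [hlhs, hi1, hi2, hp1 u, hp2 u, hM u]
      simp only [pd1, pd2]
      match_scalars <;> field_simp <;> ring
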